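/- Let p ≥ q ≥ 1, let n ≥ 1, and let B be a real p×q matrix. For any two positive divisors k and l of n, the (np+q)-square matrices F_k ⊕ 0_{(n − n/k)p + (1−k)q} and F_l ⊕ 0_{(n − n/l)p + (1−l)q} are cospectral, i.e., they have the same characteristic polynomial (after transporting along a bijection of their index types, both of cardinality np+q). -/

import Mathlib

open Matrix

/-- The matrix `F_k` of the generalization of Construction I: indexed by
`(Fin (n/k) × Fin p) ⊕ (Fin k × Fin q)`, with a copy of `B` between every `p`-block and every
`q`-block, and zero blocks otherwise. -/
def matF (p q n k : ℕ) (B : Matrix (Fin p) (Fin q) ℝ) :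
    Matrix ((Fin (n / k) × Fin p) ⊕ Fin k × Fin q) ((Fin (n / k) × Fin p) ⊕ Fin k × Fin q) ℝ :=
  Matrix.of fun a b =>
    match a, b with
    | Sum.inl (_, i), Sum.inr (_, j) => B i j
    | Sum.inr (_, j), Sum.inl (_, i) => B i j
    | _, _ => 0

section aux
open Polynomial
variable {R : Type*} [CommRing R]

lemma charpoly_mul_comm_rect {a b : Type*} [Fintype a] [Fintype b] [DecidableEq a]
    [DecidableEq b] (M : Matrix a b R) (N : Matrix b a R) :
    X ^ (Fintype.card b) * (M * N).charpoly = X ^ (Fintype.card a) * (N * M).charpoly := by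
  classical
  set M' : Matrix a b R[X] := M.map (C : R → R[X]) with hM'
  set N' : Matrix b a R[X] := N.map (C : R → R[X]) with hN'
  have hsa : det (Matrix.scalar a (X : R[X])) = X ^ (Fintype.card a) := by
    rw [scalar_apply, det_diagonal, Finset.prod_const, Finset.card_univ]
  have hsb : det (Matrix.scalar b (X : R[X])) = X ^ (Fintype.card b) := by
    rw [scalar_apply, det_diagonal, Finset.prod_const, Finset.card_univ]
  have hcomm : M' * Matrix.diagonal (fun _ : b => (X : R[X])) =
      Matrix.diagonal (fun _ : a => (X : R[X])) * M' := by
    ext i j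
    simp [mul_diagonal, diagonal_mul, mul_comm]
  have key : fromBlocks (Matrix.scalar a (X : R[X])) M' N' (1 : Matrix b b R[X]) *
        fromBlocks 1 0 0 (Matrix.scalar b (X : R[X])) =
      fromBlocks (Matrix.scalar a (X : R[X])) 0 0 (1 : Matrix b b R[X]) *
        fromBlocks 1 M' N' (Matrix.scalar b (X : R[X])) := by
    simp [fromBlocks_multiply, scalar_apply, hcomm]
  have hdet := congrArg Matrix.det key
  rw [det_mul, det_mul, det_fromBlocks_zero₂₁, det_fromBlocks_zero₂₁,
    det_fromBlocks_one₂₂, det_fromBlocks_one₁₁] at hdet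
  simp only [det_one, one_mul, mul_one] at hdet
  rw [hsa, hsb] at hdet
  have hmap1 : (C : R →+* R[X]).mapMatrix (M * N) = M' * N' :=
    Matrix.map_mul (f := (C : R →+* R[X]))
  have hmap2 : (C : R →+* R[X]).mapMatrix (N * M) = N' * M' :=
    Matrix.map_mul (f := (C : R →+* R[X]))
  have h1 : (M * N).charpoly = det (Matrix.scalar a (X : R[X]) - M' * N') := by
    rw [Matrix.charpoly, charmatrix, hmap1]
  have h2 : (N * M).charpoly = det (Matrix.scalar b (X : R[X]) - N' * M') := by
    rw [Matrix.charpoly, charmatrix, hmap2]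
  rw [h1, h2, mul_comm ((X:R[X])^Fintype.card b) _]
  rw [hdet, mul_comm]

end aux

open Polynomial in
/-- The key computation: the padded `F_k` has, up to a fixed power of `X`, the same
characteristic polynomial as a fixed `2q × 2q` matrix depending only on `n` and `B`. -/
lemma matF_key (p q n k : ℕ) (hq : 1 ≤ q) (hpq : q ≤ p) (hn : 1 ≤ n) (hk : k ∣ n) (hk1 : 1 ≤ k)
    (B : Matrix (Fin p) (Fin q) ℝ) :
    X ^ (2 * q) * (Matrix.fromBlocks (matF p q n k B) 0 0
        (0 : Matrix (Fin (n * p + q - (k * q + n / k * p)))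
          (Fin (n * p + q - (k * q + n / k * p))) ℝ)).charpoly =
    X ^ (n * p + q) *
      (Matrix.fromBlocks 0 1 ((n : ℝ) • (Bᵀ * B)) 0 :
        Matrix (Fin q ⊕ Fin q) (Fin q ⊕ Fin q) ℝ).charpoly := by
  classical
  set m := n / k with hm
  have hkm : k * m = n := Nat.mul_div_cancel' hk
  set s := n * p + q - (k * q + m * p) with hs
  have hm1 : 1 ≤ m := by
    rcases Nat.eq_zero_or_pos m with h | h
    · rw [h, mul_zero] at hkm; omega
    · exact h
  -- the size inequality
  have hle : k * q + m * p ≤ n * p + q := by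
    rw [← hkm]
    zify
    have h3 : (0:ℤ) ≤ ((k:ℤ) - 1) * ((m:ℤ) - 1) := by
      have : (1:ℤ) ≤ k := by exact_mod_cast hk1
      have : (1:ℤ) ≤ m := by exact_mod_cast hm1
      nlinarith
    have h4 : (0:ℤ) ≤ ((k:ℤ) - 1) * ((p:ℤ) - q) := by
      have : (1:ℤ) ≤ k := by exact_mod_cast hk1
      have : (q:ℤ) ≤ p := by exact_mod_cast hpq
      nlinarith
    have h5 : (0:ℤ) ≤ ((m:ℤ) - 1) * (((k:ℤ) - 1) * p) := by
      have : (1:ℤ) ≤ k := by exact_mod_cast hk1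
      have h6 : (1:ℤ) ≤ m := by exact_mod_cast hm1
      have h7 : (1:ℤ) ≤ k := by exact_mod_cast hk1
      have : (0:ℤ) ≤ p := by positivity
      nlinarith
    nlinarith
  -- The factor matrices
  set X0 : Matrix (Fin m × Fin p) (Fin q) ℝ := Matrix.of (fun ia c => B ia.2 c) with hX0
  set Y0 : Matrix (Fin k × Fin q) (Fin q) ℝ :=
    Matrix.of (fun jb c => if jb.2 = c then (1:ℝ) else 0) with hY0
  set Cin : Matrix ((Fin m × Fin p) ⊕ Fin k × Fin q) (Fin q ⊕ Fin q) ℝ :=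
    fromBlocks X0 0 0 Y0 with hCin
  set Rin : Matrix (Fin q ⊕ Fin q) ((Fin m × Fin p) ⊕ Fin k × Fin q) ℝ :=
    fromBlocks 0 Y0ᵀ X0ᵀ 0 with hRin
  set Cf : Matrix (((Fin m × Fin p) ⊕ Fin k × Fin q) ⊕ Fin s) ((Fin q ⊕ Fin q) ⊕ Fin 0) ℝ :=
    fromBlocks Cin 0 0 0 with hCf
  set Rf : Matrix ((Fin q ⊕ Fin q) ⊕ Fin 0) (((Fin m × Fin p) ⊕ Fin k × Fin q) ⊕ Fin s) ℝ :=
    fromBlocks Rin 0 0 0 with hRf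
  -- products
  have hXY : X0 * Y0ᵀ = Matrix.of (fun ia jb => B ia.2 jb.2) := by
    ext ia jb
    simp [hX0, hY0, mul_apply, transpose_apply]
  have hYX : Y0 * X0ᵀ = Matrix.of (fun jb ia => B ia.2 jb.2) := by
    ext jb ia
    simp [hX0, hY0, mul_apply, transpose_apply]
  have hCinRin : Cin * Rin = matF p q n k B := by
    rw [hCin, hRin, fromBlocks_multiply]
    ext x y
    rcases x with ⟨i, a⟩ | ⟨j, b⟩ <;> rcases y with ⟨i', a'⟩ | ⟨j', b'⟩ <;>
      simp [hXY, hYX, matF]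
  have hCR : Cf * Rf = fromBlocks (matF p q n k B) 0 0 (0 : Matrix (Fin s) (Fin s) ℝ) := by
    rw [hCf, hRf, fromBlocks_multiply]
    simp [hCinRin]
  have hYY : Y0ᵀ * Y0 = (k : ℝ) • (1 : Matrix (Fin q) (Fin q) ℝ) := by
    ext c d
    simp only [hY0, mul_apply, transpose_apply, Matrix.of_apply, Matrix.smul_apply, one_apply,
      smul_eq_mul]
    rw [Fintype.sum_prod_type_right]
    simp only [ite_mul, one_mul, zero_mul, Finset.sum_ite_eq, Finset.mem_univ, if_true]
    rcases eq_or_ne c d with h | h <;> simp [h, Finset.filter_eq, eq_comm]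
  have hXX : X0ᵀ * X0 = (m : ℝ) • (Bᵀ * B) := by
    ext c d
    simp only [hX0, mul_apply, transpose_apply, Matrix.of_apply, Matrix.smul_apply, smul_eq_mul]
    rw [Fintype.sum_prod_type]
    simp [Finset.sum_comm, mul_apply, Finset.mul_sum]
  have hRinCin : Rin * Cin =
      fromBlocks 0 ((k : ℝ) • (1 : Matrix (Fin q) (Fin q) ℝ)) ((m : ℝ) • (Bᵀ * B)) 0 := by
    rw [hRin, hCin, fromBlocks_multiply]
    simp [hYY, hXX]
  have hRC : Rf * Cf = fromBlocks (Rin * Cin) 0 0 (0 : Matrix (Fin 0) (Fin 0) ℝ) := by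
    rw [hRf, hCf, fromBlocks_multiply]
    simp
  -- the 2q × 2q reduction
  set G := Bᵀ * B with hG
  set P : Matrix (Fin q ⊕ Fin q) (Fin q ⊕ Fin q) ℝ := fromBlocks 0 1 ((m : ℝ) • G) 0 with hP
  set Q : Matrix (Fin q ⊕ Fin q) (Fin q ⊕ Fin q) ℝ :=
    fromBlocks 1 0 0 ((k : ℝ) • 1) with hQ
  have hPQ : P * Q = fromBlocks 0 ((k : ℝ) • (1 : Matrix (Fin q) (Fin q) ℝ)) ((m : ℝ) • G) 0 := by
    rw [hP, hQ, fromBlocks_multiply]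
    simp
  have hQP : Q * P = fromBlocks 0 1 ((n : ℝ) • G) 0 := by
    rw [hP, hQ, fromBlocks_multiply]
    have : ((k : ℝ) • (1 : Matrix (Fin q) (Fin q) ℝ)) * ((m : ℝ) • G) = (n : ℝ) • G := by
      rw [smul_mul_assoc, mul_smul_comm, one_mul, smul_smul, ← Nat.cast_mul, hkm]
    simp [this]
  have hsmall : (fromBlocks 0 ((k : ℝ) • (1 : Matrix (Fin q) (Fin q) ℝ))
      ((m : ℝ) • G) 0).charpoly = (fromBlocks 0 1 ((n : ℝ) • G) 0 :
        Matrix (Fin q ⊕ Fin q) (Fin q ⊕ Fin q) ℝ).charpoly := by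
    have h := charpoly_mul_comm_rect P Q
    rw [hPQ, hQP] at h
    exact mul_left_cancel₀ (pow_ne_zero _ Polynomial.X_ne_zero) h
  -- cardinalities
  have hcards : Fintype.card ((Fin q ⊕ Fin q) ⊕ Fin 0) = 2 * q := by
    simp [Fintype.card_sum]
    omega
  have hcardi : Fintype.card ((((Fin m × Fin p) ⊕ Fin k × Fin q) ⊕ Fin s)) = n * p + q := by
    simp [Fintype.card_sum, Fintype.card_prod, hs]
    omega
  -- assemble
  have hempty : (0 : Matrix (Fin 0) (Fin 0) ℝ).charpoly = 1 := by
    simp [Matrix.charpoly, Matrix.det_isEmpty]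
  have hright : (fromBlocks (Rin * Cin) 0 0 (0 : Matrix (Fin 0) (Fin 0) ℝ)).charpoly =
      (fromBlocks 0 1 ((n : ℝ) • G) 0 :
        Matrix (Fin q ⊕ Fin q) (Fin q ⊕ Fin q) ℝ).charpoly := by
    rw [Matrix.charpoly_fromBlocks_zero₁₂, hempty, mul_one, hRinCin, hsmall]
  have main := charpoly_mul_comm_rect Cf Rf
  rw [hcards, hcardi, hCR, hRC, hright] at main
  exact main

lemma matF_size_le (p q n k : ℕ) (hpq : q ≤ p) (hn : 1 ≤ n) (hk : k ∣ n) (hk1 : 1 ≤ k) :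
    k * q + n / k * p ≤ n * p + q := by
  set m := n / k with hm
  have hkm : k * m = n := Nat.mul_div_cancel' hk
  rcases Nat.eq_zero_or_pos m with h | hm1
  · rw [h, mul_zero] at hkm; omega
  rw [← hkm]
  zify
  have h3 : (1:ℤ) ≤ k := by exact_mod_cast hk1
  have h4 : (1:ℤ) ≤ m := by exact_mod_cast hm1
  have h5 : (q:ℤ) ≤ p := by exact_mod_cast hpq
  have h6 : (0:ℤ) ≤ ((k:ℤ) - 1) * ((p:ℤ) - q) := by nlinarith
  have h7 : (0:ℤ) ≤ ((m:ℤ) - 1) * (((k:ℤ) - 1) * p) :=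
    mul_nonneg (by linarith) (mul_nonneg (by linarith) (by positivity))
  nlinarith

/-- For any two positive divisors `k` and `l` of `n`, the `(np+q)`-square matrices
`F_k ⊕ 0_{(n − n/k)p + (1−k)q}` and `F_l ⊕ 0_{(n − n/l)p + (1−l)q}` are cospectral.
(The number of padding zeros `(n − n/k)p + (1−k)q = np + q − (kq + (n/k)p)`.) -/
theorem matF_cospectral (p q n k l : ℕ) (hq : 1 ≤ q) (hpq : q ≤ p) (hn : 1 ≤ n)
    (hk : k ∣ n) (hk1 : 1 ≤ k) (hl : l ∣ n) (hl1 : 1 ≤ l)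
    (B : Matrix (Fin p) (Fin q) ℝ) :
    ∃ e : (((Fin (n / k) × Fin p) ⊕ Fin k × Fin q) ⊕ Fin (n * p + q - (k * q + n / k * p))) ≃
        (((Fin (n / l) × Fin p) ⊕ Fin l × Fin q) ⊕ Fin (n * p + q - (l * q + n / l * p))),
      (Matrix.fromBlocks (matF p q n k B) 0 0
          (0 : Matrix (Fin (n * p + q - (k * q + n / k * p)))
            (Fin (n * p + q - (k * q + n / k * p))) ℝ)).charpoly =
        ((Matrix.fromBlocks (matF p q n l B) 0 0
            (0 : Matrix (Fin (n * p + q - (l * q + n / l * p)))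
              (Fin (n * p + q - (l * q + n / l * p))) ℝ)).submatrix e e).charpoly := by
  have hlek := matF_size_le p q n k hpq hn hk hk1
  have hlel := matF_size_le p q n l hpq hn hl hl1
  have hcard : Fintype.card
        (((Fin (n / k) × Fin p) ⊕ Fin k × Fin q) ⊕ Fin (n * p + q - (k * q + n / k * p))) =
      Fintype.card
        (((Fin (n / l) × Fin p) ⊕ Fin l × Fin q) ⊕ Fin (n * p + q - (l * q + n / l * p))) := by
    simp only [Fintype.card_sum, Fintype.card_prod, Fintype.card_fin]
    omega
  refine ⟨Fintype.equivOfCardEq hcard, ?_⟩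
  set e := Fintype.equivOfCardEq hcard with he
  have hsub : ((Matrix.fromBlocks (matF p q n l B) 0 0
      (0 : Matrix (Fin (n * p + q - (l * q + n / l * p)))
        (Fin (n * p + q - (l * q + n / l * p))) ℝ)).submatrix e e).charpoly =
      (Matrix.fromBlocks (matF p q n l B) 0 0
      (0 : Matrix (Fin (n * p + q - (l * q + n / l * p)))
        (Fin (n * p + q - (l * q + n / l * p))) ℝ)).charpoly := by
    have heq : (Matrix.fromBlocks (matF p q n l B) 0 0
        (0 : Matrix (Fin (n * p + q - (l * q + n / l * p)))
          (Fin (n * p + q - (l * q + n / l * p))) ℝ)).submatrix e e =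
        Matrix.reindex e.symm e.symm (Matrix.fromBlocks (matF p q n l B) 0 0
        (0 : Matrix (Fin (n * p + q - (l * q + n / l * p)))
          (Fin (n * p + q - (l * q + n / l * p))) ℝ)) := by
      simp [Matrix.reindex_apply]
    rw [heq, Matrix.charpoly_reindex]
  rw [hsub]
  have h1 := matF_key p q n k hq hpq hn hk hk1 B
  have h2 := matF_key p q n l hq hpq hn hl hl1 B
  exact mul_left_cancel₀ (pow_ne_zero _ Polynomial.X_ne_zero) (h1.trans h2.symm)
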